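/- Let b ≥ 2 and let L be a field of characteristic zero. Suppose y is a nonzero Puiseux series over L and u := (M y)/y is a ramified rational function (i.e., u ∈ L(x^{1/q}) for some q ≥ 1), where M is the substitution x ↦ x^b. Write y = x^{m/q'} s(x^{1/q'}) with s ∈ L[[x]], s(0) = c ≠ 0, m ∈ ℤ, q' ≥ 1. Then g(x) := s(x^b)/s(x) is a rational function in L(x) with g(0) = 1, and s(x) = c·∏_{k≥0} 1/g(x^{b^k}) where the infinite product converges in the x-adic topology of L[[x]]. -/

import Mathlib

/-- `f(x^b)`: the power series obtained from `f` by substituting `x^b` for `x`. -/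
noncomputable def compPow {R : Type*} [Semiring R] (b : ℕ) (f : PowerSeries R) :
    PowerSeries R :=
  PowerSeries.mk fun n => if b ∣ n then PowerSeries.coeff (R := R) (n / b) f else 0

/-- Rescaling the exponents of a Hahn series in `L((x^ℚ))` by a positive rational `c`
(i.e. substituting `x^c` for `x`). -/
noncomputable def scaleHahn (L : Type*) [Field L] (c : ℚ) (hc : 0 < c) :
    HahnSeries ℚ L →+* HahnSeries ℚ L :=
  HahnSeries.embDomainRingHom (AddMonoidHom.mulLeft c)
    (fun x y h => by
      simpa [AddMonoidHom.coe_mulLeft] using mul_left_cancel₀ hc.ne' h)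
    (fun g g' => by
      simpa [AddMonoidHom.coe_mulLeft] using mul_le_mul_iff_right₀ hc)

/-- The Mahler operator `x ↦ x^b` on Hahn series with rational exponents. -/
noncomputable def mahlerHahn (L : Type*) [Field L] (b : ℕ) (hb : 0 < b) :
    HahnSeries ℚ L →+* HahnSeries ℚ L :=
  scaleHahn L (b : ℚ) (by positivity)

/-- The polynomial `p(x^{1/q})`, as a Hahn series with rational exponents. -/
noncomputable def polyToHahn (L : Type*) [Field L] (q : ℕ) (p : Polynomial L) :
    HahnSeries ℚ L :=
  ∑ n ∈ Finset.range (p.natDegree + 1), HahnSeries.single ((n : ℚ) / q) (p.coeff n)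

/-- The power series `s(x^{1/q})`, as a Hahn series with rational exponents. -/
noncomputable def psToHahn (L : Type*) [Field L] (q : ℕ) (hq : 0 < q)
    (s : PowerSeries L) : HahnSeries ℚ L :=
  scaleHahn L ((q : ℚ)⁻¹) (by positivity) (HahnSeries.ofPowerSeries ℚ L s)

section Lemmas

variable {L : Type*} [Field L]

theorem compPow_coeff {R : Type*} [Semiring R] (b : ℕ) (f : PowerSeries R) (n : ℕ) :
    PowerSeries.coeff (R := R) n (compPow b f) =
      if b ∣ n then PowerSeries.coeff (R := R) (n / b) f else 0 := by
  simp [compPow]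

theorem compPow_coeff_mul {R : Type*} [Semiring R] {b : ℕ} (hb : 0 < b) (f : PowerSeries R)
    (n : ℕ) : PowerSeries.coeff (R := R) (b * n) (compPow b f) = PowerSeries.coeff (R := R) n f := by
  rw [compPow_coeff, if_pos ⟨n, rfl⟩, Nat.mul_div_cancel_left _ hb]

theorem compPow_one_apply {R : Type*} [Semiring R] (f : PowerSeries R) : compPow 1 f = f := by
  ext n; simp [compPow_coeff]

theorem compPow_injective {R : Type*} [Semiring R] {b : ℕ} (hb : 0 < b) :
    Function.Injective (compPow (R := R) b) := by
  intro f g h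
  ext n
  rw [← compPow_coeff_mul hb f n, ← compPow_coeff_mul hb g n, h]

theorem constantCoeff_compPow {R : Type*} [Semiring R] (b : ℕ) (f : PowerSeries R) :
    PowerSeries.constantCoeff (R := R) (compPow b f) = PowerSeries.constantCoeff (R := R) f := by
  have := compPow_coeff b f 0
  simpa [PowerSeries.coeff_zero_eq_constantCoeff] using this

theorem scaleHahn_coeff (c : ℚ) (hc : 0 < c) (x : HahnSeries ℚ L) (r : ℚ) :
    (scaleHahn L c hc x).coeff r = x.coeff (r / c) := by
  have : r = c * (r / c) := by field_simp
  rw [this]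
  rw [mul_div_cancel_left₀ _ hc.ne']
  exact HahnSeries.embDomain_coeff

theorem scaleHahn_injective (c : ℚ) (hc : 0 < c) :
    Function.Injective (scaleHahn L c hc) := by
  intro x y h
  ext r
  have := congrArg (fun z => HahnSeries.coeff z (c * r)) h
  simpa [scaleHahn_coeff, mul_div_cancel_left₀ _ hc.ne'] using this

theorem scaleHahn_scaleHahn (c d : ℚ) (hc : 0 < c) (hd : 0 < d) (x : HahnSeries ℚ L) :
    scaleHahn L c hc (scaleHahn L d hd x) = scaleHahn L (c * d) (by positivity) x := by
  ext r
  rw [scaleHahn_coeff, scaleHahn_coeff, scaleHahn_coeff, div_div]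

theorem scaleHahn_single (c : ℚ) (hc : 0 < c) (r : ℚ) (a : L) :
    scaleHahn L c hc (HahnSeries.single r a) = HahnSeries.single (c * r) a := by
  ext r'
  rw [scaleHahn_coeff]
  rcases eq_or_ne r' (c * r) with h | h
  · subst h
    rw [mul_div_cancel_left₀ _ hc.ne', HahnSeries.coeff_single_same, HahnSeries.coeff_single_same]
  · rw [HahnSeries.coeff_single_of_ne h, HahnSeries.coeff_single_of_ne]
    intro hcon
    exact h (by field_simp at hcon ⊢; linarith [hcon])

end Lemmas

section Lemmas2

variable {L : Type*} [Field L]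

theorem hahn_sum_coeff {L : Type*} [Field L] {ι : Type*} (f : ι → HahnSeries ℚ L) (t : Finset ι) (r : ℚ) :
    (∑ i ∈ t, f i).coeff r = ∑ i ∈ t, (f i).coeff r :=
  map_sum (HahnSeries.coeff.addMonoidHom r) f t

theorem ofPS_coeff_nat (f : PowerSeries L) (n : ℕ) :
    (HahnSeries.ofPowerSeries ℚ L f).coeff (n : ℚ) = PowerSeries.coeff (R := L) n f :=
  HahnSeries.ofPowerSeries_apply_coeff f n

theorem ofPS_coeff_notin (f : PowerSeries L) (r : ℚ) (hr : ¬ ∃ n : ℕ, (n : ℚ) = r) :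
    (HahnSeries.ofPowerSeries ℚ L f).coeff r = 0 := by
  rw [HahnSeries.ofPowerSeries_apply]
  exact HahnSeries.embDomain_notin_range (by simpa [Set.range] using hr)

theorem scaleHahn_ofPS (n : ℕ) (hn : 0 < n) (f : PowerSeries L) :
    scaleHahn L (n : ℚ) (by exact_mod_cast hn) (HahnSeries.ofPowerSeries ℚ L f) =
      HahnSeries.ofPowerSeries ℚ L (compPow n f) := by
  have hn' : (n : ℚ) ≠ 0 := by exact_mod_cast hn.ne'
  ext r
  rw [scaleHahn_coeff]
  by_cases hr : ∃ j : ℕ, (j : ℚ) = r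
  · obtain ⟨j, rfl⟩ := hr
    rw [ofPS_coeff_nat, compPow_coeff]
    by_cases hd : n ∣ j
    · obtain ⟨k, rfl⟩ := hd
      rw [if_pos ⟨k, rfl⟩, Nat.mul_div_cancel_left _ hn]
      have : ((n * k : ℕ) : ℚ) / n = (k : ℚ) := by push_cast; field_simp
      rw [this, ofPS_coeff_nat]
    · rw [if_neg hd, ofPS_coeff_notin]
      rintro ⟨k, hk⟩
      apply hd
      have : (j : ℚ) = (n * k : ℕ) := by push_cast; field_simp at hk; linarith [hk]
      exact ⟨k, by exact_mod_cast this⟩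
  · rw [ofPS_coeff_notin _ _ hr, ofPS_coeff_notin]
    rintro ⟨k, hk⟩
    exact hr ⟨n * k, by push_cast; field_simp at hk; linarith [hk]⟩

theorem scaleHahn_congr {c d : ℚ} (hc : 0 < c) (hd : 0 < d) (h : c = d) (x : HahnSeries ℚ L) :
    scaleHahn L c hc x = scaleHahn L d hd x := by
  subst h; rfl

theorem scaleHahn_one_apply (x : HahnSeries ℚ L) : scaleHahn L 1 one_pos x = x := by
  ext r; rw [scaleHahn_coeff, div_one]

theorem polyToHahn_eq (q : ℕ) (hq : 0 < q) (p : Polynomial L) :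
    polyToHahn L q p = scaleHahn L ((q : ℚ)⁻¹) (by positivity)
      (HahnSeries.ofPowerSeries ℚ L (p : PowerSeries L)) := by
  have hq' : (q : ℚ) ≠ 0 := by exact_mod_cast hq.ne'
  apply scaleHahn_injective (q : ℚ) (by exact_mod_cast hq)
  rw [scaleHahn_scaleHahn, scaleHahn_congr _ one_pos (mul_inv_cancel₀ hq'), scaleHahn_one_apply]
  rw [polyToHahn, map_sum]
  ext r
  by_cases hr : ∃ j : ℕ, (j : ℚ) = r
  · obtain ⟨j, rfl⟩ := hr
    rw [ofPS_coeff_nat, Polynomial.coeff_coe]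
    classical
    rw [hahn_sum_coeff]
    have hterm : ∀ n ∈ Finset.range (p.natDegree + 1),
        (scaleHahn L (q : ℚ) (by exact_mod_cast hq)
          (HahnSeries.single ((n : ℚ) / q) (p.coeff n))).coeff (j : ℚ)
        = if n = j then p.coeff n else 0 := by
      intro n _
      rw [scaleHahn_single, mul_div_cancel₀ _ hq']
      rcases eq_or_ne n j with h | h
      · subst h; simp [HahnSeries.coeff_single_same]
      · rw [if_neg h, HahnSeries.coeff_single_of_ne (by exact_mod_cast h.symm)]
    rw [Finset.sum_congr rfl hterm, Finset.sum_ite_eq' (Finset.range (p.natDegree + 1)) j]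
    by_cases hj : j ∈ Finset.range (p.natDegree + 1)
    · rw [if_pos hj]
    · rw [if_neg hj, eq_comm]
      exact Polynomial.coeff_eq_zero_of_natDegree_lt (by simpa using Nat.lt_of_succ_le (not_lt.mp (by simpa [Finset.mem_range] using hj)))
  · rw [ofPS_coeff_notin _ _ hr]
    classical
    rw [hahn_sum_coeff]
    apply Finset.sum_eq_zero
    intro n _
    rw [scaleHahn_single, mul_div_cancel₀ _ hq']
    exact HahnSeries.coeff_single_of_ne (fun h => hr ⟨n, h.symm⟩)

end Lemmas2

section Lemmas3

variable {L : Type*} [Field L]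

theorem ofPS_compPow (n : ℕ) (hn : 0 < n) (f : PowerSeries L) :
    HahnSeries.ofPowerSeries ℚ L (compPow n f) =
      scaleHahn L (n : ℚ) (by exact_mod_cast hn) (HahnSeries.ofPowerSeries ℚ L f) :=
  (scaleHahn_ofPS n hn f).symm

theorem compPow_mul {n : ℕ} (hn : 0 < n) (f g : PowerSeries L) :
    compPow n (f * g) = compPow n f * compPow n g := by
  apply HahnSeries.ofPowerSeries_injective (Γ := ℚ)
  rw [map_mul, ofPS_compPow n hn, ofPS_compPow n hn, ofPS_compPow n hn, map_mul, map_mul]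

theorem compPow_one {n : ℕ} (hn : 0 < n) : compPow n (1 : PowerSeries L) = 1 := by
  ext k
  rw [compPow_coeff]
  by_cases hd : n ∣ k
  · rw [if_pos hd, PowerSeries.coeff_one, PowerSeries.coeff_one]
    obtain ⟨j, rfl⟩ := hd
    rcases Nat.eq_zero_or_pos j with rfl | hj
    · simp
    · rw [Nat.mul_div_cancel_left _ hn, if_neg hj.ne', if_neg (Nat.mul_ne_zero hn.ne' hj.ne')]
  · rw [if_neg hd, PowerSeries.coeff_one, if_neg]
    rintro rfl
    exact hd (dvd_zero n)

theorem compPow_compPow {a b : ℕ} (ha : 0 < a) (hb : 0 < b) (f : PowerSeries L) :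
    compPow a (compPow b f) = compPow (a * b) f := by
  apply HahnSeries.ofPowerSeries_injective (Γ := ℚ)
  rw [ofPS_compPow a ha, ofPS_compPow b hb, ofPS_compPow (a * b) (by positivity),
    scaleHahn_scaleHahn]
  exact scaleHahn_congr _ _ (by push_cast; ring) _

theorem compPow_add {R : Type*} [Semiring R] (n : ℕ) (f g : PowerSeries R) :
    compPow n (f + g) = compPow n f + compPow n g := by
  ext k
  simp only [compPow_coeff, map_add]
  split <;> simp

theorem poly_comp_coe {n : ℕ} (hn : 0 < n) (p : Polynomial L) :
    ((p.comp (Polynomial.X ^ n) : Polynomial L) : PowerSeries L) = compPow n (p : PowerSeries L) := by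
  induction p using Polynomial.induction_on' with
  | add p q hp hq =>
    rw [Polynomial.add_comp, Polynomial.coe_add, Polynomial.coe_add, hp, hq, compPow_add]
  | monomial d a =>
    rw [Polynomial.monomial_comp, ← pow_mul, Polynomial.coe_mul, Polynomial.coe_C,
      Polynomial.coe_pow, Polynomial.coe_X]
    ext k
    rw [PowerSeries.coeff_C_mul, PowerSeries.coeff_X_pow, compPow_coeff]
    by_cases hd : n ∣ k
    · obtain ⟨j, rfl⟩ := hd
      rw [if_pos (show n ∣ n * j from ⟨j, rfl⟩), Nat.mul_div_cancel_left _ hn,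
        Polynomial.coeff_coe, Polynomial.coeff_monomial]
      rcases eq_or_ne j d with rfl | hjd
      · simp
      · rw [if_neg (show ¬ n * j = n * d from fun h => hjd (Nat.eq_of_mul_eq_mul_left hn h)),
          if_neg (Ne.symm hjd), mul_zero]
    · rw [if_neg hd, mul_ite, mul_one, mul_zero, if_neg]
      rintro rfl
      exact hd ⟨d, rfl⟩

end Lemmas3

section Descent

variable {L : Type*} [Field L]

/-- Strip powers of `X` off a nonzero polynomial. -/
theorem poly_strip (p : Polynomial L) (hp : p ≠ 0) :
    ∃ (k : ℕ) (p₀ : Polynomial L), p = Polynomial.X ^ k * p₀ ∧ p₀.coeff 0 ≠ 0 := by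
  generalize hd : p.natDegree = d
  induction d using Nat.strong_induction_on generalizing p with
  | _ d ih =>
    by_cases h0 : p.coeff 0 ≠ 0
    · exact ⟨0, p, by simp, h0⟩
    · push_neg at h0
      have hX : Polynomial.X ∣ p := Polynomial.X_dvd_iff.mpr h0
      obtain ⟨p', rfl⟩ := hX
      have hp' : p' ≠ 0 := fun h => hp (by simp [h])
      have hdeg : p'.natDegree < d := by
        have := Polynomial.natDegree_mul (Polynomial.X_ne_zero (R := L)) hp'
        rw [this, Polynomial.natDegree_X] at hd
        omega
      obtain ⟨k, p₀, heq, h₀⟩ := ih p'.natDegree hdeg p' hp' rfl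
      exact ⟨k + 1, p₀, by rw [heq]; ring, h₀⟩

/-- Minimal-polynomial trick: a nonzero polynomial with nonzero constant term divides
`μ(X^q)` for some polynomial `μ` with nonzero constant term. -/
theorem annihilator_exists (q : ℕ) (W : Polynomial L) (hW : W.coeff 0 ≠ 0) :
    ∃ (μ C : Polynomial L), μ.coeff 0 ≠ 0 ∧ μ.comp (Polynomial.X ^ q) = W * C := by
  have hW0 : W ≠ 0 := fun h => hW (by simp [h])
  have : Module.Finite L (AdjoinRoot W) := PowerBasis.finite (AdjoinRoot.powerBasis hW0)
  have hint : IsIntegral L ((AdjoinRoot.root W) ^ q) := IsIntegral.of_finite L _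
  obtain ⟨μ₁, hmonic, heval⟩ := hint
  have hμ₁ : μ₁ ≠ 0 := hmonic.ne_zero
  have hdvd : W ∣ μ₁.comp (Polynomial.X ^ q) := by
    rw [← AdjoinRoot.mk_eq_zero]
    rw [← AdjoinRoot.aeval_eq, Polynomial.aeval_comp]
    simpa [Polynomial.aeval_def] using heval
  obtain ⟨j, μ, rfl, hμ0⟩ := poly_strip μ₁ hμ₁
  have hdvd2 : W ∣ Polynomial.X ^ (j * q) * μ.comp (Polynomial.X ^ q) := by
    rwa [Polynomial.mul_comp, Polynomial.X_pow_comp, ← pow_mul, Nat.mul_comm q j] at hdvd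
  have hcop : IsCoprime (Polynomial.X ^ (j * q)) W :=
    ((Polynomial.prime_X (R := L)).coprime_iff_not_dvd.mpr
      (fun h => hW (Polynomial.X_dvd_iff.mp h))).pow_left
  obtain ⟨C, hC⟩ := hcop.symm.dvd_of_dvd_mul_left hdvd2
  exact ⟨μ, C, hμ0, hC⟩

/-- Extraction: if `F(x^q)` is a polynomial then `F` is a polynomial. -/
theorem extract_poly {q : ℕ} (hq : 0 < q) (F : PowerSeries L) (P : Polynomial L)
    (h : compPow q F = (P : PowerSeries L)) :
    ∃ P' : Polynomial L, F = (P' : PowerSeries L) ∧ P'.coeff 0 = P.coeff 0 := by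
  classical
  set P' : Polynomial L := ∑ n ∈ Finset.range (P.natDegree + 1),
    Polynomial.monomial n (P.coeff (q * n)) with hP'
  have hcoeff : ∀ n, P'.coeff n = P.coeff (q * n) := by
    intro n
    rw [hP', Polynomial.finset_sum_coeff]
    simp only [Polynomial.coeff_monomial]
    rw [Finset.sum_ite_eq' (Finset.range (P.natDegree + 1)) n]
    by_cases hn : n ∈ Finset.range (P.natDegree + 1)
    · rw [if_pos hn]
    · rw [if_neg hn, eq_comm]
      apply Polynomial.coeff_eq_zero_of_natDegree_lt
      have hn' : P.natDegree < n := by simpa [Finset.mem_range] using Nat.lt_of_succ_le (not_lt.mp (by simpa [Finset.mem_range] using hn))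
      calc P.natDegree < n := hn'
        _ ≤ q * n := Nat.le_mul_of_pos_left n hq
  refine ⟨P', ?_, by simpa using hcoeff 0⟩
  ext n
  have := congrArg (PowerSeries.coeff (R := L) (q * n)) h
  rw [compPow_coeff_mul hq, Polynomial.coeff_coe] at this
  rw [this, Polynomial.coeff_coe, hcoeff]

/-- Descent: if `g(x^q)` satisfies a polynomial relation, so does `g`. -/
theorem descent {q : ℕ} (hq : 0 < q) (g : PowerSeries L) (W V : Polynomial L) (hW : W ≠ 0)
    (h : compPow q g * (W : PowerSeries L) = (V : PowerSeries L)) :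
    ∃ (μ P : Polynomial L), μ.coeff 0 ≠ 0 ∧ P.coeff 0 = PowerSeries.constantCoeff (R := L) g * μ.coeff 0 ∧
      g * (μ : PowerSeries L) = (P : PowerSeries L) := by
  obtain ⟨k, W₀, rfl, hW₀⟩ := poly_strip W hW
  -- V is divisible by X^k
  have hVdvd : Polynomial.X ^ k ∣ V := by
    rw [Polynomial.X_pow_dvd_iff]
    intro d hd
    have := congrArg (PowerSeries.coeff (R := L) d) h
    rw [Polynomial.coeff_coe] at this
    rw [← this]
    rw [Polynomial.coe_mul, Polynomial.coe_pow, Polynomial.coe_X]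
    have : compPow q g * ((PowerSeries.X : PowerSeries L) ^ k * (W₀ : PowerSeries L)) =
        (compPow q g * (W₀ : PowerSeries L)) * PowerSeries.X ^ k := by ring
    rw [this, PowerSeries.coeff_mul_X_pow']
    rw [if_neg (by omega)]
  obtain ⟨V₀, rfl⟩ := hVdvd
  have hcancel : compPow q g * (W₀ : PowerSeries L) = (V₀ : PowerSeries L) := by
    have hXk : (PowerSeries.X : PowerSeries L) ^ k ≠ 0 := pow_ne_zero _ PowerSeries.X_ne_zero
    apply mul_right_cancel₀ hXk
    rw [Polynomial.coe_mul, Polynomial.coe_pow, Polynomial.coe_X] at h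
    calc compPow q g * (W₀ : PowerSeries L) * PowerSeries.X ^ k
        = compPow q g * (PowerSeries.X ^ k * (W₀ : PowerSeries L)) := by ring
      _ = (V₀ : PowerSeries L) * PowerSeries.X ^ k := by
          rw [h, Polynomial.coe_mul, Polynomial.coe_pow, Polynomial.coe_X]; ring
  obtain ⟨μ, C, hμ0, hμcomp⟩ := annihilator_exists q W₀ hW₀
  have hkey : compPow q (g * (μ : PowerSeries L)) = ((V₀ * C : Polynomial L) : PowerSeries L) := by
    rw [compPow_mul hq, ← poly_comp_coe hq, hμcomp, Polynomial.coe_mul, Polynomial.coe_mul,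
      ← mul_assoc, hcancel]
  obtain ⟨P, hP, _⟩ := extract_poly hq (g * (μ : PowerSeries L)) (V₀ * C) hkey
  refine ⟨μ, P, hμ0, ?_, hP⟩
  have := congrArg (PowerSeries.constantCoeff (R := L)) hP
  simpa [PowerSeries.coeff_zero_eq_constantCoeff] using this.symm

end Descent

/-- Let `b ≥ 2` and let `y` be a nonzero Puiseux series over a field
`L` of characteristic zero, written as `y = x^{m/q'} · s(x^{1/q'})` with `s ∈ L[[x]]`,
`s(0) = c ≠ 0`.  Suppose `u := M y / y` is a ramified rational function (i.e.
`M y · B(x^{1/q}) = y · A(x^{1/q})` for some polynomials `A, B` with `B ≠ 0`).  Then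
`g(x) := s(x^b)/s(x)` is a rational function in `L(x)` with `g(0) = 1` (there are
polynomials `A, B` with `A(0) = B(0) = 1` and `s(x^b)·B = A·s`), and
`s(x) = c · ∏_{k≥0} 1/g(x^{b^k})` where the infinite product converges in the `x`-adic
topology of `L[[x]]` (partial products agree with `s/c` coefficientwise up to order
`b^N`). -/
theorem ramified_rational_hypergeometric_structure
    {L : Type*} [Field L] [CharZero L] (b : ℕ) (hb : 2 ≤ b)
    (q' : ℕ) (hq' : 0 < q') (m : ℤ) (s : PowerSeries L) (c : L)
    (hc : PowerSeries.constantCoeff (R := L) s = c) (hc0 : c ≠ 0)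
    (y : HahnSeries ℚ L) (hy0 : y ≠ 0)
    (hy : y = HahnSeries.single ((m : ℚ) / q') 1 * psToHahn L q' hq' s)
    (hrr : ∃ (q : ℕ) (A B : Polynomial L), 0 < q ∧ B ≠ 0 ∧
      mahlerHahn L b (by omega) y * polyToHahn L q B = y * polyToHahn L q A) :
    ∃ A B : Polynomial L, A.coeff 0 = 1 ∧ B.coeff 0 = 1 ∧
      compPow b s * (B : PowerSeries L) = (A : PowerSeries L) * s ∧
      ∀ N : ℕ, ∀ n < b ^ N,
        PowerSeries.coeff (R := L) n
            (s * ∏ k ∈ Finset.range N,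
              compPow (b ^ k) ((A : PowerSeries L) * (B : PowerSeries L)⁻¹)) =
          PowerSeries.coeff (R := L) n (PowerSeries.C (R := L) c) := by
  classical
  obtain ⟨q, A₁, B₁, hq, hB₁, hEq⟩ := hrr
  have hb0 : 0 < b := by omega
  have hq'Q : (q' : ℚ) ≠ 0 := by exact_mod_cast hq'.ne'
  have hqQ : (q : ℚ) ≠ 0 := by exact_mod_cast hq.ne'
  set D : ℕ := q * q' with hD
  have hD0 : 0 < D := Nat.mul_pos hq hq'
  have hDQ : (D : ℚ) ≠ 0 := by exact_mod_cast hD0.ne'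
  have hφpos : (0:ℚ) < (D : ℚ)⁻¹ := by positivity
  set e : ℤ := ((b : ℤ) - 1) * m * q with he
  set a : ℕ := (-e).toNat with ha
  set a' : ℕ := e.toNat with ha'
  have haa' : (a' : ℤ) = e + (a : ℤ) := by
    rw [ha, ha']; omega
  -- rewrite the Mahler equation
  have hmah : mahlerHahn L b (by omega) y =
      HahnSeries.single ((b : ℚ) * ((m : ℚ) / q')) 1 * psToHahn L q' hq' (compPow b s) := by
    rw [hy]
    simp only [mahlerHahn]
    rw [map_mul, scaleHahn_single]
    congr 1
    rw [psToHahn, psToHahn, scaleHahn_scaleHahn, ofPS_compPow b hb0, scaleHahn_scaleHahn]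
    exact scaleHahn_congr _ _ (by ring) _
  rw [hmah, hy] at hEq
  -- express everything through φ := scaleHahn (1/D)
  have hSb : psToHahn L q' hq' (compPow b s) =
      scaleHahn L ((D : ℚ)⁻¹) hφpos
        (HahnSeries.ofPowerSeries ℚ L (compPow q (compPow b s))) := by
    rw [psToHahn, ofPS_compPow q hq, scaleHahn_scaleHahn]
    refine scaleHahn_congr _ _ ?_ _
    rw [hD]; push_cast; field_simp
  have hS : psToHahn L q' hq' s =
      scaleHahn L ((D : ℚ)⁻¹) hφpos (HahnSeries.ofPowerSeries ℚ L (compPow q s)) := by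
    rw [psToHahn, ofPS_compPow q hq, scaleHahn_scaleHahn]
    refine scaleHahn_congr _ _ ?_ _
    rw [hD]; push_cast; field_simp
  have hBh : polyToHahn L q B₁ =
      scaleHahn L ((D : ℚ)⁻¹) hφpos
        (HahnSeries.ofPowerSeries ℚ L (compPow q' (B₁ : PowerSeries L))) := by
    rw [polyToHahn_eq q hq, ofPS_compPow q' hq', scaleHahn_scaleHahn]
    refine scaleHahn_congr _ _ ?_ _
    rw [hD]; push_cast; field_simp
  have hAh : polyToHahn L q A₁ =
      scaleHahn L ((D : ℚ)⁻¹) hφpos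
        (HahnSeries.ofPowerSeries ℚ L (compPow q' (A₁ : PowerSeries L))) := by
    rw [polyToHahn_eq q hq, ofPS_compPow q' hq', scaleHahn_scaleHahn]
    refine scaleHahn_congr _ _ ?_ _
    rw [hD]; push_cast; field_simp
  have hsingle : ∀ n : ℕ, HahnSeries.single ((n : ℚ) / D) (1 : L) =
      scaleHahn L ((D : ℚ)⁻¹) hφpos
        (HahnSeries.ofPowerSeries ℚ L ((PowerSeries.X : PowerSeries L) ^ n)) := by
    intro n
    rw [HahnSeries.ofPowerSeries_X_pow, scaleHahn_single, inv_mul_eq_div]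
  -- exponent arithmetic
  have hkey : (a' : ℚ) = ((b : ℚ) - 1) * (m : ℚ) * (q : ℚ) + (a : ℚ) := by
    have h1 : ((a' : ℤ) : ℚ) = ((e : ℤ) : ℚ) + ((a : ℤ) : ℚ) := by exact_mod_cast haa'
    rw [he] at h1
    push_cast at h1 ⊢
    linarith
  set c₀ : ℚ := (a : ℚ) / D - (m : ℚ) / q' with hc₀
  have h1 : HahnSeries.single ((a' : ℚ) / D) (1 : L) =
      HahnSeries.single c₀ 1 * HahnSeries.single ((b : ℚ) * ((m : ℚ) / q')) 1 := by
    have harith : c₀ + (b : ℚ) * ((m : ℚ) / q') = (a' : ℚ) / D := by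
      rw [hc₀, hkey, hD]
      push_cast
      field_simp
      ring
    rw [HahnSeries.single_mul_single, mul_one, harith]
  have h2 : HahnSeries.single ((a : ℚ) / D) (1 : L) =
      HahnSeries.single c₀ 1 * HahnSeries.single ((m : ℚ) / q') 1 := by
    have harith : c₀ + (m : ℚ) / q' = (a : ℚ) / D := by rw [hc₀]; ring
    rw [HahnSeries.single_mul_single, mul_one, harith]
  have Eq2 : HahnSeries.single ((a' : ℚ) / D) (1 : L) * psToHahn L q' hq' (compPow b s) *
      polyToHahn L q B₁ =
      HahnSeries.single ((a : ℚ) / D) (1 : L) * psToHahn L q' hq' s * polyToHahn L q A₁ := by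
    rw [h1, h2]
    linear_combination (HahnSeries.single c₀ (1 : L)) * hEq
  -- descend to a power series identity
  have P1 : (PowerSeries.X : PowerSeries L) ^ a' * compPow q (compPow b s) *
      compPow q' (B₁ : PowerSeries L) =
      (PowerSeries.X : PowerSeries L) ^ a * compPow q s * compPow q' (A₁ : PowerSeries L) := by
    rw [hSb, hS, hBh, hAh, hsingle a', hsingle a] at Eq2
    simp only [← map_mul] at Eq2
    exact HahnSeries.ofPowerSeries_injective (scaleHahn_injective _ hφpos Eq2)
  -- the rational function g = s(x^b)/s(x)
  have hsc : PowerSeries.constantCoeff (R := L) s ≠ 0 := by rw [hc]; exact hc0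
  have hss : s * s⁻¹ = 1 := PowerSeries.mul_inv_cancel s hsc
  set g : PowerSeries L := compPow b s * s⁻¹ with hg
  have hinv : compPow q s⁻¹ * compPow q s = 1 := by
    rw [← compPow_mul hq, PowerSeries.inv_mul_cancel s hsc, compPow_one hq]
  set W : Polynomial L := Polynomial.X ^ a' * B₁.comp (Polynomial.X ^ q') with hW
  set V : Polynomial L := Polynomial.X ^ a * A₁.comp (Polynomial.X ^ q') with hV
  have hWcoe : (W : PowerSeries L) =
      (PowerSeries.X : PowerSeries L) ^ a' * compPow q' (B₁ : PowerSeries L) := by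
    rw [hW, Polynomial.coe_mul, Polynomial.coe_pow, Polynomial.coe_X, poly_comp_coe hq']
  have hVcoe : (V : PowerSeries L) =
      (PowerSeries.X : PowerSeries L) ^ a * compPow q' (A₁ : PowerSeries L) := by
    rw [hV, Polynomial.coe_mul, Polynomial.coe_pow, Polynomial.coe_X, poly_comp_coe hq']
  have hWne : W ≠ 0 := by
    intro h
    have : (W : PowerSeries L) = 0 := by rw [h, Polynomial.coe_zero]
    rw [hWcoe] at this
    have hB₁ps : (B₁ : PowerSeries L) ≠ 0 := fun hh => hB₁ (Polynomial.coe_eq_zero_iff.mp hh)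
    have hcB : compPow q' (B₁ : PowerSeries L) ≠ 0 := by
      intro hh
      apply hB₁ps
      apply compPow_injective hq'
      rw [hh]
      ext k
      simp [compPow_coeff]
    exact mul_ne_zero (pow_ne_zero _ PowerSeries.X_ne_zero) hcB this
  have hWV : compPow q g * (W : PowerSeries L) = (V : PowerSeries L) := by
    rw [hWcoe, hVcoe, hg, compPow_mul hq]
    calc compPow q (compPow b s) * compPow q s⁻¹ *
          ((PowerSeries.X : PowerSeries L) ^ a' * compPow q' (B₁ : PowerSeries L))
        = compPow q s⁻¹ * ((PowerSeries.X : PowerSeries L) ^ a' * compPow q (compPow b s) *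
            compPow q' (B₁ : PowerSeries L)) := by ring
      _ = compPow q s⁻¹ * ((PowerSeries.X : PowerSeries L) ^ a * compPow q s *
            compPow q' (A₁ : PowerSeries L)) := by rw [P1]
      _ = (compPow q s⁻¹ * compPow q s) *
            ((PowerSeries.X : PowerSeries L) ^ a * compPow q' (A₁ : PowerSeries L)) := by ring
      _ = (PowerSeries.X : PowerSeries L) ^ a * compPow q' (A₁ : PowerSeries L) := by
            rw [hinv, one_mul]
  obtain ⟨μ, P, hμ0, hP0, hgP⟩ := descent hq g W V hWne hWV
  have hgconst : PowerSeries.constantCoeff (R := L) g = 1 := by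
    rw [hg, map_mul, constantCoeff_compPow, PowerSeries.constantCoeff_inv, hc,
      mul_inv_cancel₀ hc0]
  rw [hgconst, one_mul] at hP0
  set d : L := μ.coeff 0 with hd
  have hd0 : d ≠ 0 := hμ0
  refine ⟨Polynomial.C d⁻¹ * P, Polynomial.C d⁻¹ * μ, ?_, ?_, ?_, ?_⟩
  · simp [hP0, hd, inv_mul_cancel₀ hd0]; exact inv_mul_cancel₀ hd0
  · simp [hd, inv_mul_cancel₀ hd0]; exact inv_mul_cancel₀ hd0
  · -- main identity
    have hmain : compPow b s * (μ : PowerSeries L) = (P : PowerSeries L) * s := by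
      rw [hg] at hgP
      linear_combination s * hgP - compPow b s * (μ : PowerSeries L) * hss
    rw [Polynomial.coe_mul, Polynomial.coe_mul, Polynomial.coe_C]
    linear_combination (PowerSeries.C (R := L) d⁻¹) * hmain
  · -- product formula
    set Apoly : Polynomial L := Polynomial.C d⁻¹ * P with hA
    set Bpoly : Polynomial L := Polynomial.C d⁻¹ * μ with hB
    have hmain : compPow b s * (μ : PowerSeries L) = (P : PowerSeries L) * s := by
      rw [hg] at hgP
      linear_combination s * hgP - compPow b s * (μ : PowerSeries L) * hss
    have hfinal : compPow b s * (Bpoly : PowerSeries L) = (Apoly : PowerSeries L) * s := by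
      rw [hA, hB, Polynomial.coe_mul, Polynomial.coe_mul, Polynomial.coe_C]
      linear_combination (PowerSeries.C (R := L) d⁻¹) * hmain
    have hBconst : PowerSeries.constantCoeff (R := L) (Bpoly : PowerSeries L) ≠ 0 := by
      have h0 : PowerSeries.constantCoeff (R := L) (Bpoly : PowerSeries L) = Bpoly.coeff 0 := by
        rw [← Polynomial.coeff_coe, PowerSeries.coeff_zero_eq_constantCoeff]
      rw [h0, hB]
      simp only [Polynomial.coeff_C_mul, ← hd]
      rw [inv_mul_cancel₀ hd0]
      exact one_ne_zero
    have hBB : (Bpoly : PowerSeries L) * (Bpoly : PowerSeries L)⁻¹ = 1 :=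
      PowerSeries.mul_inv_cancel _ hBconst
    have hprod : ∀ N : ℕ, s * ∏ k ∈ Finset.range N,
        compPow (b ^ k) ((Apoly : PowerSeries L) * (Bpoly : PowerSeries L)⁻¹) =
        compPow (b ^ N) s := by
      intro N
      induction N with
      | zero => simp [compPow_one_apply]
      | succ N ih =>
        rw [Finset.prod_range_succ, ← mul_assoc, ih, ← compPow_mul (pow_pos hb0 N)]
        have hsG : s * ((Apoly : PowerSeries L) * (Bpoly : PowerSeries L)⁻¹) = compPow b s := by
          linear_combination (Bpoly : PowerSeries L)⁻¹ * hfinal.symm + compPow b s * hBB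
        rw [hsG, compPow_compPow (pow_pos hb0 N) hb0, ← pow_succ]
    intro N n hn
    rw [hprod N, compPow_coeff, PowerSeries.coeff_C]
    rcases eq_or_ne n 0 with rfl | hn0
    · rw [if_pos (dvd_zero _), if_pos rfl, Nat.zero_div]
      simpa using hc
    · rw [if_neg, if_neg hn0]
      intro hdvd
      exact absurd (Nat.le_of_dvd (Nat.pos_of_ne_zero hn0) hdvd) (not_le.mpr hn)
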